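/- Every draft rule φ^π is Pareto efficient with respect to pairwise dominance: for every problem (≿, X) there is no allocation B of objects in X with B ≠ φ^π(≿, X) and B_i ≿_i^PD φ^π_i(≿, X) for all agents i. -/

import Mathlib

open Finset

noncomputable section

abbrev Obj := ℕ

def PD (r : Obj → Obj → Prop) (S T : Finset Obj) : Prop :=
  ∃ μ : {x // x ∈ T} → {x // x ∈ S}, Function.Injective μ ∧ ∀ x, r (μ x).1 x.1

def StrictPD (r : Obj → Obj → Prop) (S T : Finset Obj) : Prop :=
  PD r S T ∧ ¬ PD r T S

def LinProfile {n : ℕ} (pref : Fin n → Obj → Obj → Prop) : Prop :=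
  ∀ i, IsLinearOrder Obj (pref i)

def IsAlloc {n : ℕ} (A : Fin n → Finset Obj) (X : Finset Obj) : Prop :=
  (∀ i, A i ⊆ X) ∧ ∀ i j, i ≠ j → Disjoint (A i) (A j)

open Classical in
def topOf (r : Obj → Obj → Prop) (X : Finset Obj) : Obj :=
  if h : ∃ m ∈ X, ∀ x ∈ X, r m x then h.choose else 0

def remaining {n : ℕ} (pref : Fin n → Obj → Obj → Prop) (f : ℕ → Fin n)
    (X : Finset Obj) : ℕ → Finset Obj
  | 0 => X
  | k + 1 => (remaining pref f X k).erase (topOf (pref (f k)) (remaining pref f X k))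

def draft {n : ℕ} (pref : Fin n → Obj → Obj → Prop) (f : ℕ → Fin n)
    (X : Finset Obj) (i : Fin n) : Finset Obj :=
  ((Finset.range X.card).filter (fun k => f k = i)).image
    (fun k => topOf (pref (f k)) (remaining pref f X k))

def roundRobin {n : ℕ} (hn : 0 < n) (π : Equiv.Perm (Fin n)) (k : ℕ) : Fin n :=
  π.symm ⟨k % n, Nat.mod_lt k hn⟩

def draftPi {n : ℕ} (hn : 0 < n) (pref : Fin n → Obj → Obj → Prop)
    (π : Equiv.Perm (Fin n)) (X : Finset Obj) (i : Fin n) : Finset Obj :=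
  draft pref (roundRobin hn π) X i

lemma exists_top (r : Obj → Obj → Prop) (h : IsLinearOrder Obj r) :
    ∀ S : Finset Obj, S.Nonempty → ∃ m ∈ S, ∀ x ∈ S, r m x := by
  classical
  haveI := h
  intro S
  induction S using Finset.induction_on with
  | empty => simp
  | insert _ _ ha ih =>
    rename_i a s
    intro _
    rcases s.eq_empty_or_nonempty with rfl | hs
    · exact ⟨a, by simp, by simp [refl_of r a]⟩
    · obtain ⟨m, hm, hmax⟩ := ih hs
      rcases total_of r a m with hr | hr
      · refine ⟨a, mem_insert_self a s, fun x hx => ?_⟩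
        rcases mem_insert.mp hx with rfl | hx
        · exact refl_of r x
        · exact trans_of r hr (hmax x hx)
      · refine ⟨m, mem_insert_of_mem hm, fun x hx => ?_⟩
        rcases mem_insert.mp hx with rfl | hx
        · exact hr
        · exact hmax x hx

lemma topOf_spec (r : Obj → Obj → Prop) (h : IsLinearOrder Obj r)
    (S : Finset Obj) (hS : S.Nonempty) :
    topOf r S ∈ S ∧ ∀ x ∈ S, r (topOf r S) x := by
  have hex := exists_top r h S hS
  rw [topOf, dif_pos hex]
  exact ⟨hex.choose_spec.1, hex.choose_spec.2⟩

section Remaining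

variable {n : ℕ} (pref : Fin n → Obj → Obj → Prop) (f : ℕ → Fin n) (X : Finset Obj)

/-- the object picked at step k -/
def pickAt (k : ℕ) : Obj := topOf (pref (f k)) (remaining pref f X k)

lemma remaining_succ (k : ℕ) :
    remaining pref f X (k + 1) = (remaining pref f X k).erase (pickAt pref f X k) := rfl

lemma remaining_subset : ∀ k, remaining pref f X k ⊆ X := by
  intro k
  induction k with
  | zero => exact Finset.Subset.refl X
  | succ k ih => exact (Finset.erase_subset _ _).trans ih

lemma remaining_card (hpref : LinProfile pref) : ∀ k, k ≤ X.card → (remaining pref f X k).card = X.card - k := by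
  intro k
  induction k with
  | zero => simp [remaining]
  | succ k ih =>
    intro hk
    have hk' : k ≤ X.card := Nat.le_of_succ_le hk
    have hcard := ih hk'
    have hne : (remaining pref f X k).Nonempty := by
      rw [← Finset.card_pos, hcard]
      omega
    have hmem := (topOf_spec _ (hpref (f k)) _ hne).1
    rw [remaining_succ, Finset.card_erase_of_mem (show pickAt pref f X k ∈ _ from hmem), hcard]
    omega

lemma pick_mem_remaining (hpref : LinProfile pref) {k : ℕ} (hk : k < X.card) :
    pickAt pref f X k ∈ remaining pref f X k := by
  have hne : (remaining pref f X k).Nonempty := by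
    rw [← Finset.card_pos, remaining_card pref f X hpref k (le_of_lt hk)]
    omega
  exact (topOf_spec _ (hpref (f k)) _ hne).1

lemma mem_remaining_iff : ∀ k x, x ∈ remaining pref f X k ↔
    x ∈ X ∧ ∀ j < k, x ≠ pickAt pref f X j := by
  intro k
  induction k with
  | zero => simp [remaining]
  | succ k ih =>
    intro x
    rw [remaining_succ, Finset.mem_erase, ih]
    constructor
    · rintro ⟨hne, hX, hall⟩
      refine ⟨hX, fun j hj => ?_⟩
      rcases Nat.lt_succ_iff_lt_or_eq.mp hj with hj | rfl
      · exact hall j hj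
      · exact hne
    · rintro ⟨hX, hall⟩
      exact ⟨hall k (Nat.lt_succ_self k), hX, fun j hj => hall j (Nat.lt_succ_of_lt hj)⟩

lemma pick_ne (hpref : LinProfile pref) {j k : ℕ} (hjk : j < k) (hk : k < X.card) :
    pickAt pref f X k ≠ pickAt pref f X j := by
  have := pick_mem_remaining pref f X hpref hk
  rw [mem_remaining_iff] at this
  exact this.2 j hjk

lemma pick_cover (hpref : LinProfile pref) {x : Obj} (hx : x ∈ X) : ∃ k < X.card, pickAt pref f X k = x := by
  have hcard : (remaining pref f X X.card).card = 0 := by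
    rw [remaining_card pref f X hpref X.card le_rfl]; omega
  have hnot : x ∉ remaining pref f X X.card := by
    rw [Finset.card_eq_zero] at hcard
    simp [hcard]
  rw [mem_remaining_iff] at hnot
  push_neg at hnot
  obtain ⟨k, hk, heq⟩ := hnot hx
  exact ⟨k, hk, heq.symm⟩

lemma mem_draft_iff (i : Fin n) (x : Obj) :
    x ∈ draft pref f X i ↔ ∃ k < X.card, f k = i ∧ pickAt pref f X k = x := by
  simp only [draft, Finset.mem_image, Finset.mem_filter, Finset.mem_range]
  constructor
  · rintro ⟨k, ⟨hk, hfk⟩, heq⟩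
    exact ⟨k, hk, hfk, heq⟩
  · rintro ⟨k, hk, hfk, heq⟩
    exact ⟨k, ⟨hk, hfk⟩, heq⟩

end Remaining

theorem draft_efficient {n : ℕ} (hn : 0 < n) (π : Equiv.Perm (Fin n))
    (pref : Fin n → Obj → Obj → Prop) (hpref : LinProfile pref)
    (X : Finset Obj) (hX : X.Nonempty) :
    ¬ ∃ B : Fin n → Finset Obj, IsAlloc B X ∧ B ≠ draftPi hn pref π X ∧
      ∀ i, PD (pref i) (B i) (draftPi hn pref π X i) := by
  rintro ⟨B, ⟨hBX, hBdisj⟩, hBne, hPD⟩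
  classical
  set f : ℕ → Fin n := roundRobin hn π with hf
  set A : Fin n → Finset Obj := draftPi hn pref π X with hA
  have hAdraft : ∀ i, A i = draft pref f X i := fun i => rfl
  choose μ hμinj hμpref using hPD
  -- picks are in their agent's draft bundle
  have hpickA : ∀ k, k < X.card → pickAt pref f X k ∈ A (f k) := by
    intro k hk
    rw [hAdraft, mem_draft_iff]
    exact ⟨k, hk, rfl, rfl⟩
  -- key claim: for each step, the dominating match of the pick is the pick itself
  have key : ∀ k, k < X.card → ∀ i, f k = i → ∀ (h1 : pickAt pref f X k ∈ A i),
      ((μ i) ⟨pickAt pref f X k, h1⟩).1 = pickAt pref f X k := by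
    intro k
    induction k using Nat.strong_induction_on with
    | _ k ih =>
      intro hk i hfk h1
      set x := pickAt pref f X k with hx
      set y := ((μ i) ⟨x, h1⟩).1 with hy
      have hyB : y ∈ B i := ((μ i) ⟨x, h1⟩).2
      have hyx : pref i y x := hμpref i ⟨x, h1⟩
      -- y is still remaining at step k
      have hyR : y ∈ remaining pref f X k := by
        rw [mem_remaining_iff]
        refine ⟨hBX i hyB, fun j hj heq => ?_⟩
        have hjcard : j < X.card := lt_trans hj hk
        have hjA : pickAt pref f X j ∈ A (f j) := hpickA j hjcard
        have hjkey := ih j hj hjcard (f j) rfl hjA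
        have hjB : pickAt pref f X j ∈ B (f j) := by
          rw [← hjkey]; exact ((μ (f j)) ⟨pickAt pref f X j, hjA⟩).2
        by_cases hfi : f j = i
        · -- same agent: use injectivity of μ i
          subst hfi
          have hjkey' := ih j hj hjcard (f j) rfl hjA
          have heq2 : (μ (f j)) ⟨x, h1⟩ = (μ (f j)) ⟨pickAt pref f X j, hjA⟩ := by
            apply Subtype.ext
            rw [hjkey']
            exact heq
          have := hμinj (f j) heq2
          have hxj : x = pickAt pref f X j := congrArg Subtype.val this
          exact pick_ne pref f X hpref hj hk hxj
        · -- different agent: disjointness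
          have hdisj := hBdisj (f j) i hfi
          have : y ∈ B (f j) := by rw [heq]; exact hjB
          exact (Finset.disjoint_left.mp hdisj this) hyB
      -- maximality of the pick among remaining objects
      have hne : (remaining pref f X k).Nonempty := ⟨_, pick_mem_remaining pref f X hpref hk⟩
      have hmax := (topOf_spec _ (hpref (f k)) _ hne).2 y hyR
      have hmax' : pref i x y := by rw [← hfk]; exact hmax
      haveI := hpref i
      exact antisymm hyx hmax'
  -- A i ⊆ B i
  have hAB : ∀ i, A i ⊆ B i := by
    intro i x hx
    have hx' := hx
    rw [hAdraft, mem_draft_iff] at hx'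
    obtain ⟨k, hk, hfk, hpick⟩ := hx'
    have hxA : pickAt pref f X k ∈ A i := by rwa [hpick]
    have hkey := key k hk i hfk hxA
    have : ((μ i) ⟨pickAt pref f X k, hxA⟩).1 ∈ B i := ((μ i) ⟨pickAt pref f X k, hxA⟩).2
    rwa [hkey, hpick] at this
  -- B i ⊆ A i
  have hBA : ∀ i, B i ⊆ A i := by
    intro i b hb
    have hbX : b ∈ X := hBX i hb
    obtain ⟨k, hk, hpick⟩ := pick_cover pref f X hpref hbX
    have hbA : b ∈ A (f k) := by rw [← hpick]; exact hpickA k hk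
    by_cases hfi : f k = i
    · rwa [hfi] at hbA
    · exfalso
      have hbB : b ∈ B (f k) := hAB (f k) hbA
      exact (Finset.disjoint_left.mp (hBdisj (f k) i hfi) hbB) hb
  exact hBne (funext fun i => Finset.Subset.antisymm (hBA i) (hAB i))
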